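/- For every fixed real λ > 0, the coefficient of s^n in the power series expansion of (1−s)^{−λ}, which equals (1/n!)·∏_{j=0}^{n-1}(λ + j), satisfies (1/n!)·∏_{j=0}^{n-1}(λ + j) = (n^{λ−1}/Γ(λ))·(1 + O(1/n)) as n → ∞; precisely, there exist constants C and N such that for all n ≥ N, |(Γ(λ)·∏_{j=0}^{n-1}(λ + j))/(n!·n^{λ−1}) − 1| ≤ C/n. -/

import Mathlib

open Real

/-- Upper part of Wendel's inequality: `Γ(x+s) ≤ Γ(x)·x^s` for `0 < s < 1`. -/
lemma wendel_upper {x s : ℝ} (hx : 0 < x) (hs : 0 < s) (hs1 : s < 1) :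
    Real.Gamma (x + s) ≤ Real.Gamma x * x ^ s := by
  have h := Real.Gamma_mul_add_mul_le_rpow_Gamma_mul_rpow_Gamma hx
    (by linarith : (0:ℝ) < x + 1) (by linarith : (0:ℝ) < 1 - s) hs (by ring)
  have harg : (1 - s) * x + s * (x + 1) = x + s := by ring
  rw [harg, Real.Gamma_add_one hx.ne'] at h
  have hG : 0 < Real.Gamma x := Real.Gamma_pos_of_pos hx
  calc Real.Gamma (x + s) ≤ Real.Gamma x ^ (1 - s) * (x * Real.Gamma x) ^ s := h
    _ = Real.Gamma x * x ^ s := by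
        rw [Real.mul_rpow hx.le hG.le, ← mul_assoc,
          mul_comm (Real.Gamma x ^ (1 - s)) (x ^ s), mul_assoc,
          ← Real.rpow_add hG]
        norm_num
        ring

/-- Lower part of Wendel's inequality: `x·Γ(x) ≤ Γ(x+s)·(x+s)^(1-s)`. -/
lemma wendel_lower {x s : ℝ} (hx : 0 < x) (hs : 0 < s) (hs1 : s < 1) :
    x * Real.Gamma x ≤ Real.Gamma (x + s) * (x + s) ^ (1 - s) := by
  have hxs : (0:ℝ) < x + s := by linarith
  have h := Real.Gamma_mul_add_mul_le_rpow_Gamma_mul_rpow_Gamma hxs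
    (by linarith : (0:ℝ) < x + s + 1) hs (by linarith : (0:ℝ) < 1 - s) (by ring)
  have harg : s * (x + s) + (1 - s) * (x + s + 1) = x + 1 := by ring
  rw [harg, Real.Gamma_add_one hx.ne', Real.Gamma_add_one hxs.ne'] at h
  have hGs : 0 < Real.Gamma (x + s) := Real.Gamma_pos_of_pos hxs
  calc x * Real.Gamma x
      ≤ Real.Gamma (x + s) ^ s * ((x + s) * Real.Gamma (x + s)) ^ (1 - s) := h
    _ = Real.Gamma (x + s) * (x + s) ^ (1 - s) := by
        rw [Real.mul_rpow hxs.le hGs.le, ← mul_assoc,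
          mul_comm (Real.Gamma (x + s) ^ s) ((x + s) ^ (1 - s)), mul_assoc,
          ← Real.rpow_add hGs]
        norm_num
        ring

/-- Wendel's inequality with explicit error: for `x ≥ 1` and `0 < s < 1`. -/
lemma wendel {x s : ℝ} (hx : 0 < x) (hs : 0 < s) (hs1 : s < 1) :
    |Real.Gamma (x + s) / (Real.Gamma x * x ^ s) - 1| ≤ 1 / x := by
  have hxs : (0:ℝ) < x + s := by linarith
  have hG : 0 < Real.Gamma x := Real.Gamma_pos_of_pos hx
  have hGs : 0 < Real.Gamma (x + s) := Real.Gamma_pos_of_pos hxs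
  have hxp : (0:ℝ) < x ^ s := Real.rpow_pos_of_pos hx s
  have hden : (0:ℝ) < Real.Gamma x * x ^ s := by positivity
  set f := Real.Gamma (x + s) / (Real.Gamma x * x ^ s) with hf
  have hupper : f ≤ 1 := by
    rw [hf, div_le_one hden]
    exact wendel_upper hx hs hs1
  have hlow : x / (x + s) ≤ f := by
    rw [hf, div_le_div_iff₀ hxs hden]
    -- x * (Γ x * x^s) ≤ Γ (x+s) * (x+s)
    have h1 : x * Real.Gamma x * x ^ s ≤ Real.Gamma (x + s) * (x + s) ^ (1 - s) * (x + s) ^ s := by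
      have h2 : x ^ s ≤ (x + s) ^ s := Real.rpow_le_rpow hx.le (by linarith) hs.le
      have := wendel_lower hx hs hs1
      calc x * Real.Gamma x * x ^ s ≤ (Real.Gamma (x + s) * (x + s) ^ (1 - s)) * x ^ s := by
            gcongr
        _ ≤ Real.Gamma (x + s) * (x + s) ^ (1 - s) * (x + s) ^ s := by
            gcongr
    have h3 : Real.Gamma (x + s) * (x + s) ^ (1 - s) * (x + s) ^ s = Real.Gamma (x + s) * (x + s) := by
      rw [mul_assoc, ← Real.rpow_add hxs]
      norm_num
    calc x * (Real.Gamma x * x ^ s) = x * Real.Gamma x * x ^ s := by ring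
      _ ≤ Real.Gamma (x + s) * (x + s) := by rw [← h3]; exact h1
  rw [abs_le]
  constructor
  · have : 1 - f ≤ 1 - x / (x + s) := by linarith
    have h4 : 1 - x / (x + s) = s / (x + s) := by field_simp; ring
    have h5 : s / (x + s) ≤ 1 / x := by
      rw [div_le_div_iff₀ hxs hx]
      nlinarith
    nlinarith [h5, h4 ▸ this]
  · have : (0:ℝ) < 1 / x := by positivity
    linarith

/-- Main ratio bound, by induction shifting `lam` down by 1. -/
lemma gamma_ratio_bound : ∀ k : ℕ, ∀ lam : ℝ, 0 < lam → lam ≤ k + 1 →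
    ∃ C : ℝ, 0 ≤ C ∧ ∀ x : ℝ, 1 ≤ x →
      |Real.Gamma (x + lam) / (Real.Gamma x * x ^ lam) - 1| ≤ C / x := by
  intro k
  induction k with
  | zero =>
    intro lam hlam hlam1
    refine ⟨1, zero_le_one, fun x hx => ?_⟩
    have hx0 : (0:ℝ) < x := by linarith
    rcases lt_or_eq_of_le (by simpa using hlam1 : lam ≤ 1) with h | h
    · exact wendel hx0 hlam h
    · subst h
      have hG : 0 < Real.Gamma x := Real.Gamma_pos_of_pos hx0
      rw [Real.rpow_one, Real.Gamma_add_one hx0.ne']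
      have h1 : x * Real.Gamma x / (Real.Gamma x * x) = 1 := by
        field_simp
      rw [h1]
      simp
      positivity
  | succ k ih =>
    intro lam hlam hlam1
    by_cases hle : lam ≤ k + 1
    · exact ih lam hlam hle
    · push_neg at hle
      set mu := lam - 1 with hmu
      have hmu0 : 0 < mu := by
        have : (0:ℝ) ≤ k := Nat.cast_nonneg k
        simp only [hmu]; linarith
      have hmu1 : mu ≤ k + 1 := by
        push_cast at hlam1
        simp only [hmu]; linarith
      obtain ⟨C, hC0, hC⟩ := ih mu hmu0 hmu1
      refine ⟨C * (1 + mu) + mu, by positivity, fun x hx => ?_⟩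
      have hx0 : (0:ℝ) < x := by linarith
      have hxmu : (0:ℝ) < x + mu := by linarith
      have hG : 0 < Real.Gamma x := Real.Gamma_pos_of_pos hx0
      have hxp : (0:ℝ) < x ^ mu := Real.rpow_pos_of_pos hx0 mu
      have hlam' : lam = mu + 1 := by simp [hmu]
      have key : Real.Gamma (x + lam) / (Real.Gamma x * x ^ lam)
          = Real.Gamma (x + mu) / (Real.Gamma x * x ^ mu) * (1 + mu / x) := by
        rw [hlam']
        have h1 : x + (mu + 1) = (x + mu) + 1 := by ring
        rw [h1, Real.Gamma_add_one hxmu.ne', Real.rpow_add hx0, Real.rpow_one]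
        field_simp
      rw [key]
      set g := Real.Gamma (x + mu) / (Real.Gamma x * x ^ mu) with hg
      have hgb : |g - 1| ≤ C / x := hC x hx
      have hmux : 0 < 1 + mu / x := by positivity
      have e : g * (1 + mu / x) - 1 = (g - 1) * (1 + mu / x) + mu / x := by ring
      rw [e]
      calc |(g - 1) * (1 + mu / x) + mu / x|
          ≤ |(g - 1) * (1 + mu / x)| + |mu / x| := abs_add_le _ _
        _ = |g - 1| * (1 + mu / x) + mu / x := by
            rw [abs_mul, abs_of_pos hmux, abs_of_pos (by positivity : (0:ℝ) < mu / x)]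
        _ ≤ (C / x) * (1 + mu) + mu / x := by
            have h2 : 1 + mu / x ≤ 1 + mu := by
              have : mu / x ≤ mu := by
                rw [div_le_iff₀ hx0]; nlinarith
              linarith
            have h3 := mul_le_mul hgb h2 (by positivity) (div_nonneg hC0 hx0.le)
            linarith
        _ = (C * (1 + mu) + mu) / x := by field_simp

lemma gamma_prod (lam : ℝ) (hlam : 0 < lam) :
    ∀ n : ℕ, Real.Gamma lam * ∏ j ∈ Finset.range n, (lam + (j : ℝ)) = Real.Gamma (lam + n) := by
  intro n
  induction n with
  | zero => simp
  | succ n ih =>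
    rw [Finset.prod_range_succ, ← mul_assoc, ih]
    have h : lam + (n : ℝ) ≠ 0 := by positivity
    push_cast
    rw [show lam + ((n:ℝ) + 1) = (lam + (n:ℝ)) + 1 by ring, Real.Gamma_add_one h, mul_comm]

theorem binomial_coeff_asymptotic (lam : ℝ) (hlam : 0 < lam) :
    ∃ C : ℝ, ∃ N : ℕ, ∀ n ≥ N,
      |Real.Gamma lam * (∏ j ∈ Finset.range n, (lam + (j : ℝ))) /
          ((Nat.factorial n : ℝ) * (n : ℝ) ^ (lam - 1)) - 1| ≤ C / n := by
  obtain ⟨C, hC0, hC⟩ := gamma_ratio_bound ⌈lam⌉₊ lam hlam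
    (by push_cast; linarith [Nat.le_ceil lam])
  refine ⟨C, 1, fun n hn => ?_⟩
  have hn0 : (0:ℝ) < n := by exact_mod_cast hn
  have hn1 : (1:ℝ) ≤ n := by exact_mod_cast hn
  have key : Real.Gamma lam * (∏ j ∈ Finset.range n, (lam + (j : ℝ))) /
      ((Nat.factorial n : ℝ) * (n : ℝ) ^ (lam - 1))
      = Real.Gamma ((n:ℝ) + lam) / (Real.Gamma n * (n:ℝ) ^ lam) := by
    rw [gamma_prod lam hlam n, add_comm lam (n:ℝ)]
    congr 1
    have hfact : (Nat.factorial n : ℝ) = Real.Gamma (n + 1) := by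
      rw [Real.Gamma_nat_eq_factorial]
    rw [hfact]
    push_cast
    rw [Real.Gamma_add_one hn0.ne']
    rw [show lam = (lam - 1) + 1 by ring, Real.rpow_add hn0, Real.rpow_one]
    ring
  rw [key]
  exact hC n hn1
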